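/- arXiv:1604.05902 — 4 statements merged into one kernel-verified Lean document; each statement's English description precedes it below -/
import Mathlib

section
/- Let m > 2 be odd and let G = D_{2m} be the dihedral group of order 2m (Mathlib's DihedralGroup m). Then the characteristic polynomial of the adjacency matrix of the commuting graph Γ_G (over the reals) equals (X + 1)^(m − 2) · X^m · (X − (m − 2)); in particular G is commuting integral. -/
open Polynomial

/-- The commuting graph of a group `G`: vertices are the non-central elements,
two distinct vertices are adjacent iff they commute. -/
def commutingGraph (G : Type*) [Group G] : SimpleGraph {x : G // x ∉ Subgroup.center G} where
  Adj x y := x ≠ y ∧ (x : G) * y = (y : G) * x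
  symm := ⟨by rintro x y ⟨hne, hc⟩; exact ⟨hne.symm, hc.symm⟩⟩
  loopless := ⟨by rintro x ⟨hne, _⟩; exact hne rfl⟩

open scoped Classical in
/-- The characteristic polynomial (over `ℝ`) of the adjacency matrix of the
commuting graph of `G`. -/
noncomputable def commCharpoly (G : Type*) [Group G] [Fintype G] : Polynomial ℝ :=
  ((commutingGraph G).adjMatrix ℝ).charpoly

section Aux
open Matrix

lemma evalCharpoly' {n : Type*} [Fintype n] [DecidableEq n] (M : Matrix n n ℝ) (t : ℝ) :
    M.charpoly.eval t = (t • (1 : Matrix n n ℝ) - M).det := by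
  have : M.charpoly.eval t = (evalRingHom t) M.charpoly := rfl
  rw [this, Matrix.charpoly, RingHom.map_det]
  congr 1
  ext i j
  by_cases h : i = j
  · subst h
    simp [charmatrix_apply_eq, Matrix.one_apply]
  · simp [charmatrix_apply_ne _ _ _ h, Matrix.one_apply_ne h, h]

lemma charpolyComplete {S : Type*} [Fintype S] [DecidableEq S] [Nonempty S] :
    (Matrix.of fun i j : S => if i = j then (0:ℝ) else 1).charpoly
      = (X + 1) ^ (Fintype.card S - 1) * (X - C ((Fintype.card S : ℝ) - 1)) := by
  obtain ⟨k, hk⟩ : ∃ k, Fintype.card S = k + 1 :=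
    ⟨_, (Nat.succ_pred_eq_of_pos Fintype.card_pos).symm⟩
  apply Polynomial.eq_of_infinite_eval_eq
  apply Set.Infinite.mono (s := {-1}ᶜ) _ ((Set.finite_singleton (-1 : ℝ)).infinite_compl)
  intro t ht
  have ht1 : t + 1 ≠ 0 := fun h => ht (by simp only [Set.mem_singleton_iff]; linarith)
  have key : t • (1 : Matrix S S ℝ) - (Matrix.of fun i j : S => if i = j then (0:ℝ) else 1)
      = (t + 1) • (1 + Matrix.replicateCol Unit (fun _ => (1:ℝ)) * Matrix.replicateRow Unit (fun _ => -(t+1)⁻¹)) := by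
    ext i j
    have hmul : (Matrix.replicateCol Unit (fun _ => (1:ℝ)) * Matrix.replicateRow Unit (fun _ => -(t+1)⁻¹)) i j
        = -(t+1)⁻¹ := by
      simp [Matrix.mul_apply]
    by_cases h : i = j
    · subst h
      simp only [Matrix.sub_apply, Matrix.smul_apply, Matrix.one_apply_eq, Matrix.of_apply,
        if_pos rfl, Matrix.add_apply, hmul, smul_eq_mul]
      field_simp
      simp only [if_true]; ring
    · simp only [Matrix.sub_apply, Matrix.smul_apply, Matrix.one_apply_ne h, Matrix.of_apply,
        if_neg h, Matrix.add_apply, hmul, smul_eq_mul]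
      field_simp
      ring
  simp only [Set.mem_setOf_eq, evalCharpoly', key]
  rw [Matrix.det_smul, Matrix.det_one_add_replicateCol_mul_replicateRow]
  have hdot : (fun _ : S => -(t+1)⁻¹) ⬝ᵥ (fun _ => (1:ℝ))
      = (Fintype.card S : ℝ) * (-(t+1)⁻¹) := by
    simp [dotProduct, Finset.sum_const, Finset.card_univ, mul_comm]
  rw [hdot, hk]
  simp only [eval_mul, eval_pow, eval_add, eval_X, eval_one, eval_sub, eval_C,
    Nat.add_sub_cancel]
  push_cast
  field_simp
  ring

lemma charpolyZeroM {n : Type*} [Fintype n] [DecidableEq n] :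
    (0 : Matrix n n ℝ).charpoly = X ^ (Fintype.card n) := by
  rw [Matrix.charpoly]
  have : Matrix.charmatrix (0 : Matrix n n ℝ) = Matrix.diagonal (fun _ => (X : ℝ[X])) := by
    ext i j
    by_cases h : i = j
    · subst h; simp [charmatrix_apply_eq]
    · simp [charmatrix_apply_ne _ _ _ h, Matrix.diagonal_apply_ne _ h]
  rw [this, Matrix.det_diagonal]
  simp [Finset.prod_const, Finset.card_univ]

end Aux

section Center
variable {m : ℕ} [NeZero m]

lemma twoNeZero' (hm : 2 < m) : (2 : ZMod m) ≠ 0 := by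
  intro h
  have h2 : ((2 : ℕ) : ZMod m) = 0 := by exact_mod_cast h
  rw [ZMod.natCast_eq_zero_iff] at h2
  have := Nat.le_of_dvd (by norm_num) h2
  omega

omit [NeZero m] in
lemma eqZeroOfEqNeg (hmodd : Odd m) {i : ZMod m} (h : i = -i) : i = 0 := by
  have h2 : (2 : ZMod m) * i = 0 := by linear_combination h
  have hu : IsUnit (2 : ZMod m) := by
    have := (ZMod.isUnit_iff_coprime 2 m).mpr (Nat.coprime_two_left.mpr hmodd)
    exact_mod_cast this
  exact (hu.mul_right_eq_zero).mp h2

lemma memCenterIff' (hm : 2 < m) (hmodd : Odd m) (x : DihedralGroup m) :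
    x ∈ Subgroup.center (DihedralGroup m) ↔ x = 1 := by
  constructor
  · intro h
    rw [Subgroup.mem_center_iff] at h
    match x with
    | .r i =>
      have h1 := h (.sr 0)
      simp only [DihedralGroup.sr_mul_r, DihedralGroup.r_mul_sr, zero_add, zero_sub,
        DihedralGroup.sr.injEq] at h1
      have : i = 0 := eqZeroOfEqNeg hmodd h1
      rw [this, DihedralGroup.one_def]
    | .sr i =>
      have h1 := h (.r 1)
      simp only [DihedralGroup.r_mul_sr, DihedralGroup.sr_mul_r, DihedralGroup.sr.injEq] at h1
      exact absurd (by linear_combination -h1 : (2 : ZMod m) = 0) (twoNeZero' hm)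
  · rintro rfl
    exact Subgroup.one_mem _

end Center

lemma adjCharpolyInstIrrel {V : Type*} (G : SimpleGraph V)
    (d1 : DecidableEq V) (f1 : Fintype V) (a1 : DecidableRel G.Adj)
    [d2 : DecidableEq V] [f2 : Fintype V] [a2 : DecidableRel G.Adj] :
    @Matrix.charpoly ℝ _ V d1 f1 (@SimpleGraph.adjMatrix ℝ V G a1 _ _)
      = @Matrix.charpoly ℝ _ V d2 f2 (@SimpleGraph.adjMatrix ℝ V G a2 _ _) := by
  obtain rfl : d1 = d2 := Subsingleton.elim _ _
  obtain rfl : f1 = f2 := Subsingleton.elim _ _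
  obtain rfl : a1 = a2 := Subsingleton.elim _ _
  rfl

open scoped Classical

theorem commuting_integral_dihedral_odd
    (m : ℕ) [NeZero m] (hm : 2 < m) (hmodd : Odd m) :
    commCharpoly (DihedralGroup m) =
        (X + 1) ^ (m - 2) * X ^ m * (X - C ((m : ℝ) - 2)) ∧
      ∀ μ : ℝ, (commCharpoly (DihedralGroup m)).IsRoot μ → ∃ k : ℤ, μ = (k : ℝ) := by
  haveI : Fact (1 < m) := ⟨by omega⟩
  have hr_mem : ∀ i : ZMod m, i ≠ 0 →
      (DihedralGroup.r i) ∉ Subgroup.center (DihedralGroup m) := by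
    intro i hi hc
    have := (memCenterIff' hm hmodd _).mp hc
    rw [DihedralGroup.one_def] at this
    exact hi (DihedralGroup.r.inj this)
  have hsr_mem : ∀ i : ZMod m,
      (DihedralGroup.sr i) ∉ Subgroup.center (DihedralGroup m) := by
    intro i hc
    have := (memCenterIff' hm hmodd _).mp hc
    rw [DihedralGroup.one_def] at this
    cases this
  set S := {i : ZMod m // i ≠ 0} with hS
  let f : S ⊕ ZMod m → {x : DihedralGroup m // x ∉ Subgroup.center (DihedralGroup m)} :=
    Sum.elim (fun i => ⟨.r i.1, hr_mem i.1 i.2⟩) (fun i => ⟨.sr i, hsr_mem i⟩)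
  have hf : Function.Bijective f := by
    constructor
    · rintro (⟨i, hi⟩ | i) (⟨j, hj⟩ | j) h <;>
        simp only [f, Sum.elim_inl, Sum.elim_inr, Subtype.mk.injEq, DihedralGroup.r.injEq,
          DihedralGroup.sr.injEq, reduceCtorEq] at h
      · exact congrArg Sum.inl (Subtype.ext h)
      · exact congrArg Sum.inr h
    · rintro ⟨x, hx⟩
      rcases x with i | i
      · have hi : i ≠ 0 := by
          rintro rfl
          exact hx ((memCenterIff' hm hmodd _).mpr DihedralGroup.one_def.symm)
        exact ⟨Sum.inl ⟨i, hi⟩, rfl⟩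
      · exact ⟨Sum.inr i, rfl⟩
  let e := Equiv.ofBijective f hf
  let Bm : Matrix S S ℝ := Matrix.of fun i j => if i = j then 0 else 1
  have hre : Matrix.reindex e.symm e.symm ((commutingGraph (DihedralGroup m)).adjMatrix ℝ)
      = Matrix.fromBlocks Bm 0 0 0 := by
    ext p q
    rcases p with i | i <;> rcases q with j | j <;>
      simp only [Matrix.reindex_apply, Matrix.submatrix_apply, Equiv.symm_symm,
        Matrix.fromBlocks_apply₁₁, Matrix.fromBlocks_apply₁₂, Matrix.fromBlocks_apply₂₁,
        Matrix.fromBlocks_apply₂₂, Matrix.zero_apply, SimpleGraph.adjMatrix_apply,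
        Equiv.ofBijective_apply, Sum.elim_inl, Sum.elim_inr, e, f]
    · -- inl inl
      by_cases hij : i = j
      · subst hij
        simp [commutingGraph, Bm]
      · have h1 : i.1 ≠ j.1 := fun h => hij (Subtype.ext h)
        rw [if_pos ⟨fun hcc => h1 (by injection (Subtype.ext_iff.mp hcc)), by
          show DihedralGroup.r i.1 * DihedralGroup.r j.1 = _
          simp [add_comm]⟩]
        simp [Bm, hij]
    · -- inl inr
      rw [if_neg]
      rintro ⟨-, hc⟩
      simp only [DihedralGroup.r_mul_sr, DihedralGroup.sr_mul_r, DihedralGroup.sr.injEq] at hc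
      exact i.2 (eqZeroOfEqNeg hmodd (by linear_combination -hc))
    · -- inr inl
      rw [if_neg]
      rintro ⟨-, hc⟩
      simp only [DihedralGroup.r_mul_sr, DihedralGroup.sr_mul_r, DihedralGroup.sr.injEq] at hc
      exact j.2 (eqZeroOfEqNeg hmodd (by linear_combination hc))
    · -- inr inr
      rw [if_neg]
      rintro ⟨hne, hc⟩
      simp only [DihedralGroup.sr_mul_sr, DihedralGroup.r.injEq] at hc
      have hij : i - j = 0 := eqZeroOfEqNeg hmodd (by linear_combination -hc)
      exact hne (Subtype.ext (by rw [sub_eq_zero.mp hij]))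
  haveI : Nonempty S := ⟨⟨1, one_ne_zero⟩⟩
  have hcard : Fintype.card S = m - 1 := by
    simp [S, ZMod.card]
  have hmain : commCharpoly (DihedralGroup m) =
      (X + 1) ^ (m - 2) * X ^ m * (X - C ((m : ℝ) - 2)) := by
    unfold commCharpoly
    rw [adjCharpolyInstIrrel (commutingGraph (DihedralGroup m)) _ _ _]
    rw [← Matrix.charpoly_reindex e.symm ((commutingGraph (DihedralGroup m)).adjMatrix ℝ), hre,
      Matrix.charpoly_fromBlocks_zero₂₁, charpolyComplete, charpolyZeroM, hcard, ZMod.card]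
    have hm2 : m - 1 - 1 = m - 2 := by omega
    have hc2 : ((m - 1 : ℕ) : ℝ) - 1 = (m : ℝ) - 2 := by
      rw [Nat.cast_sub (by omega : 1 ≤ m)]
      push_cast
      ring
    rw [hm2, hc2]
    ring
  refine ⟨hmain, ?_⟩
  intro μ hroot
  rw [hmain] at hroot
  simp only [IsRoot.def, eval_mul, eval_pow, eval_add, eval_X, eval_one, eval_sub, eval_C,
    mul_eq_zero] at hroot
  rcases hroot with (h | h) | h
  · have h1 : μ + 1 = 0 := pow_eq_zero_iff (by omega : m - 2 ≠ 0) |>.mp h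
    exact ⟨-1, by push_cast; linarith⟩
  · have h1 : μ = 0 := pow_eq_zero_iff (by omega : m ≠ 0) |>.mp h
    exact ⟨0, by simpa using h1⟩
  · exact ⟨(m : ℤ) - 2, by push_cast; linarith⟩
end

section
/- Let m ≥ 2 and let G = Q_{4m} be the dicyclic (generalized quaternion) group of order 4m (Mathlib's QuaternionGroup m). Then the characteristic polynomial of the adjacency matrix of the commuting graph Γ_G (over the reals) equals (X + 1)^(3m − 3) · (X − 1)^m · (X − (2m − 3)); in particular G is commuting integral. -/
open Polynomial

open QuaternionGroup

section MatrixAux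

open Matrix

variable {α : Type*} [Fintype α] [DecidableEq α]

lemma eval_charpoly' (M : Matrix α α ℝ) (x : ℝ) :
    M.charpoly.eval x = (x • (1 : Matrix α α ℝ) - M).det := by
  rw [Matrix.charpoly, ← Polynomial.coe_evalRingHom, RingHom.map_det]
  congr 1
  ext i j
  by_cases h : i = j
  · subst h
    simp [Matrix.charmatrix_apply_eq, Matrix.one_apply_eq]
  · simp [Matrix.charmatrix_apply_ne _ _ _ h, Matrix.one_apply_ne h]

lemma charpoly_complete (hα : 1 ≤ Fintype.card α) :
    (Matrix.of fun i j : α => if i = j then (0:ℝ) else 1).charpoly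
      = (X + 1) ^ (Fintype.card α - 1) * (X - C ((Fintype.card α : ℝ) - 1)) := by
  obtain ⟨K, hK⟩ : ∃ K, Fintype.card α = K + 1 := ⟨Fintype.card α - 1, (Nat.succ_pred_eq_of_pos hα).symm⟩
  apply Polynomial.eq_of_infinite_eval_eq
  apply Set.Infinite.mono (s := ({-1}ᶜ : Set ℝ))
  swap
  · exact Set.Finite.infinite_compl (Set.finite_singleton (-1))
  intro x hx
  simp only [Set.mem_compl_iff, Set.mem_singleton_iff] at hx
  have hx1 : x + 1 ≠ 0 := fun h => hx (by linarith)
  simp only [Set.mem_setOf_eq]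
  rw [eval_charpoly']
  have key : x • (1 : Matrix α α ℝ) - Matrix.of (fun i j : α => if i = j then (0:ℝ) else 1)
      = (x + 1) • (1 + Matrix.replicateCol Unit (fun _ => (1:ℝ)) * Matrix.replicateRow Unit (fun _ => -(x+1)⁻¹)) := by
    ext i j
    by_cases h : i = j
    · subst h
      simp [Matrix.one_apply_eq, Matrix.mul_apply]
      field_simp
      ring
    · simp [Matrix.one_apply_ne h, h, Matrix.mul_apply]
      field_simp
  rw [key, Matrix.det_smul, Matrix.det_one_add_replicateCol_mul_replicateRow]
  have hdot : (fun _ : α => -(x+1)⁻¹) ⬝ᵥ (fun _ => (1:ℝ)) = -((Fintype.card α : ℝ) * (x+1)⁻¹) := by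
    simp [dotProduct, Finset.card_univ, mul_comm]
  rw [hdot]
  simp only [eval_mul, eval_pow, eval_add, eval_sub, eval_X, eval_one, eval_C, hK,
    Nat.add_sub_cancel]
  push_cast
  field_simp
  ring

lemma charpoly_involution {n : Type*} [Fintype n] [DecidableEq n] (B : Matrix n n ℝ) (s : n → ℝ)
    (k : ℕ) (hk : Fintype.card n = 2 * k)
    (hB : B * B = 1) (hs : ∀ i, s i * s i = 1)
    (hsB : ∀ i j, s i * B i j * s j = - B i j) :
    B.charpoly = ((X - 1) * (X + 1)) ^ k := by
  classical
  set R := Polynomial ℝ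
  set B' : Matrix n n R := B.map C with hB'def
  set u : Matrix n n R := (X : R) • (1 : Matrix n n R) with hu
  have hchar : Matrix.charmatrix B = u - B' := by
    refine Matrix.ext fun i j => ?_
    by_cases h : i = j
    · subst h
      simp [Matrix.charmatrix_apply_eq, hu, Matrix.one_apply_eq, hB'def]
    · simp [Matrix.charmatrix_apply_ne _ _ _ h, hu, Matrix.one_apply_ne h, hB'def]
  have hB'B' : B' * B' = 1 := by
    rw [hB'def, ← Matrix.map_mul, hB, Matrix.map_one _ (map_zero C) (map_one C)]
  have huM : ∀ M : Matrix n n R, u * M = (X : R) • M := by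
    intro M; rw [hu, smul_mul_assoc, one_mul]
  have hMu : ∀ M : Matrix n n R, M * u = (X : R) • M := by
    intro M; rw [hu, mul_smul_comm, mul_one]
  have hprod : (u - B') * (u + B') = ((X : R)^2 - 1) • (1 : Matrix n n R) := by
    rw [sub_mul, mul_add, mul_add, huM, huM, hMu, hB'B']
    rw [hu, smul_smul, ← sq]
    rw [sub_smul, one_smul]
    abel
  -- determinant of both sides
  have hdet : B.charpoly * (u + B').det = ((X:R)^2 - 1) ^ (2 * k) := by
    have := congrArg Matrix.det hprod
    rw [Matrix.det_mul] at this
    rw [Matrix.charpoly, hchar, this, Matrix.det_smul, Matrix.det_one, mul_one, hk]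
  -- conjugation
  set D : Matrix n n R := (Matrix.diagonal s).map C with hD
  have hDdiag : D = Matrix.diagonal (fun i => C (s i)) := by
    rw [hD, Matrix.diagonal_map (map_zero C)]
  have hDD : D * D = 1 := by
    rw [hDdiag, Matrix.diagonal_mul_diagonal]
    have hfun : (fun i => C (s i) * C (s i)) = fun _ : n => (1:R) := by
      funext i
      rw [← _root_.map_mul, hs i, _root_.map_one]
    rw [hfun, Matrix.diagonal_one]
  have hDBD : D * B' * D = -B' := by
    rw [hDdiag]
    refine Matrix.ext fun i j => ?_
    show ((Matrix.diagonal fun i => C (s i)) * B.map C * Matrix.diagonal fun i => C (s i) : Matrix n n ℝ[X]) i j = (-(B.map C) : Matrix n n ℝ[X]) i j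
    simp only [Matrix.diagonal_mul, Matrix.mul_diagonal, Matrix.neg_apply, hB'def,
      Matrix.map_apply]
    rw [mul_comm (C (s i)) (C (B i j))]
    rw [← _root_.map_mul, ← _root_.map_mul, ← _root_.map_neg]
    congr 1
    rw [← hsB i j]
    ring
  have hconj : D * (u - B') * D = u + B' := by
    have hDuD : D * u * D = u := by
      rw [hMu D, smul_mul_assoc, hDD, hu]
    have hsplit : D * (u - B') * D = D * u * D - D * B' * D := by
      rw [mul_sub, sub_mul]
    rw [hsplit, hDuD, hDBD, sub_neg_eq_add]
  have hdetD : D.det * D.det = 1 := by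
    rw [← Matrix.det_mul, hDD, Matrix.det_one]
  have hdet2 : (u + B').det = B.charpoly := by
    have h2 := congrArg Matrix.det hconj
    rw [Matrix.det_mul, Matrix.det_mul] at h2
    rw [← h2, Matrix.charpoly, hchar]
    linear_combination (u - B').det * hdetD
  rw [hdet2] at hdet
  set r : R := ((X - 1) * (X + 1)) ^ k with hr
  have hrr : ((X:R)^2 - 1) ^ (2 * k) = r * r := by
    have hfac : ((X:R)^2 - 1) = (X - 1) * (X + 1) := by ring
    rw [hr, ← pow_add, hfac, two_mul]
  rw [hrr] at hdet
  have hfactor : (B.charpoly - r) * (B.charpoly + r) = 0 := by linear_combination hdet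
  rcases mul_eq_zero.mp hfactor with h | h
  · exact sub_eq_zero.mp h
  · exfalso
    have hq : B.charpoly = -r := eq_neg_of_add_eq_zero_left h
    have hm1 : B.charpoly.Monic := Matrix.charpoly_monic B
    have hrm : r.Monic := by
      apply Polynomial.Monic.pow
      have h1 : ((X:R) - 1).Monic := by
        have := Polynomial.monic_X_sub_C (1:ℝ)
        simpa using this
      have h2 : ((X:R) + 1).Monic := by
        have := Polynomial.monic_X_add_C (1:ℝ)
        simpa using this
      exact h1.mul h2
    have : (1:ℝ) = -1 := by
      have e1 := hm1.leadingCoeff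
      rw [hq, Polynomial.leadingCoeff_neg, hrm.leadingCoeff] at e1
      linarith
    norm_num at this

end MatrixAux

lemma zmod_add_self_eq_zero_iff (m : ℕ) (hm : 1 ≤ m) (i : ZMod (2*m)) :
    i + i = 0 ↔ i = 0 ∨ i = (m : ZMod (2*m)) := by
  haveI : NeZero (2*m) := ⟨by omega⟩
  constructor
  · intro h
    have hv : i.val < 2*m := ZMod.val_lt i
    have hcast : ((i.val : ℕ) : ZMod (2*m)) = i := by
      rw [ZMod.natCast_val, ZMod.cast_id]
    have h2 : ((i.val + i.val : ℕ) : ZMod (2*m)) = 0 := by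
      push_cast
      rw [hcast]
      exact h
    rw [ZMod.natCast_eq_zero_iff] at h2
    have h3 : m ∣ i.val := by
      have h4 : 2 * m ∣ 2 * i.val := by
        simpa [two_mul] using h2
      exact (mul_dvd_mul_iff_left (by norm_num : (2:ℕ) ≠ 0)).mp h4
    obtain ⟨c, hc⟩ := h3
    have hc2 : c < 2 := by
      by_contra hcc
      push_neg at hcc
      have : 2 * m ≤ m * c := by calc 2*m = m*2 := by ring
                                        _ ≤ m*c := Nat.mul_le_mul_left m hcc
      omega
    interval_cases c
    · left
      rw [← hcast, hc]
      simp
    · right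
      rw [← hcast, hc]
      simp
  · rintro (rfl | rfl)
    · simp
    · have : ((m : ZMod (2*m)) + m) = ((2*m : ℕ) : ZMod (2*m)) := by push_cast; ring
      rw [this, ZMod.natCast_self]

lemma zmod_m_add_m (m : ℕ) : ((m : ZMod (2*m)) + m) = 0 := by
  have : ((m : ZMod (2*m)) + m) = ((2*m : ℕ) : ZMod (2*m)) := by push_cast; ring
  rw [this, ZMod.natCast_self]

lemma zmod_m_ne_zero (m : ℕ) (hm : 1 ≤ m) : (m : ZMod (2*m)) ≠ 0 := by
  haveI : NeZero (2*m) := ⟨by omega⟩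
  intro h
  have := ZMod.val_natCast_of_lt (show m < 2*m by omega)
  rw [h, ZMod.val_zero] at this
  omega

lemma quat_mem_center_iff (m : ℕ) (hm : 2 ≤ m) (x : QuaternionGroup m) :
    x ∈ Subgroup.center (QuaternionGroup m) ↔ x = a 0 ∨ x = a (m : ZMod (2*m)) := by
  rw [Subgroup.mem_center_iff]
  constructor
  · intro h
    cases x with
    | a i =>
      have h1 := h (xa 0)
      rw [xa_mul_a, a_mul_xa] at h1
      have h2 : (0 : ZMod (2*m)) + i = 0 - i := by injection h1
      have h3 : i + i = 0 := by
        have h2' : i = -i := by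
          have := h2
          rwa [zero_add, zero_sub] at this
        linear_combination h2' 
      rcases (zmod_add_self_eq_zero_iff m (by omega) i).mp h3 with rfl | rfl
      · exact Or.inl rfl
      · exact Or.inr rfl
    | xa i =>
      exfalso
      have h1 := h (a 1)
      rw [a_mul_xa, xa_mul_a] at h1
      have h2 : i - 1 = i + 1 := by injection h1
      have h3 : (1 : ZMod (2*m)) + 1 = 0 := by
        have h2' := sub_eq_iff_eq_add.mp h2
        linear_combination -h2'
      have h4 : ((2:ℕ) : ZMod (2*m)) = 0 := by
        push_cast
        linear_combination h3
      rw [ZMod.natCast_eq_zero_iff] at h4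
      have := Nat.le_of_dvd (by norm_num) h4
      omega
  · rintro (rfl | rfl) g
    · cases g with
      | a j => rw [a_mul_a, a_mul_a, add_comm]
      | xa j => rw [xa_mul_a, a_mul_xa, add_zero, sub_zero]
    · cases g with
      | a j => rw [a_mul_a, a_mul_a, add_comm]
      | xa j =>
        rw [xa_mul_a, a_mul_xa]
        congr 1
        have hmm := zmod_m_add_m m
        have : -(m : ZMod (2*m)) = m := by
          rw [neg_eq_iff_add_eq_zero]
          exact hmm
        rw [sub_eq_add_neg, this]

lemma commutingGraph_adj {G : Type*} [Group G] (x y : {x : G // x ∉ Subgroup.center G}) :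
    (commutingGraph G).Adj x y ↔ x ≠ y ∧ (x : G) * y = (y : G) * x := Iff.rfl

def qEquiv (m : ℕ) (hm : 2 ≤ m) :
    {x : QuaternionGroup m // x ∉ Subgroup.center (QuaternionGroup m)} ≃
      ({i : ZMod (2*m) // ¬(i = 0 ∨ i = (m : ZMod (2*m)))} ⊕ ZMod (2*m)) where
  toFun v :=
    match v with
    | ⟨a i, h⟩ => Sum.inl ⟨i, fun hc =>
        h ((quat_mem_center_iff m hm _).mpr (hc.imp (congrArg a) (congrArg a)))⟩
    | ⟨xa i, _⟩ => Sum.inr i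
  invFun t :=
    match t with
    | Sum.inl ⟨i, hi⟩ => ⟨a i, fun hc =>
        hi (((quat_mem_center_iff m hm _).mp hc).imp (fun h => by injection h)
          (fun h => by injection h))⟩
    | Sum.inr i => ⟨xa i, fun hc => by
        rcases (quat_mem_center_iff m hm _).mp hc with h | h <;>
          cases h⟩
  left_inv := by rintro ⟨i | i, h⟩ <;> rfl
  right_inv := by rintro (⟨i, hi⟩ | i) <;> rfl

lemma adj_reindex (m : ℕ) (hm : 2 ≤ m)
    [inst : DecidableRel (commutingGraph (QuaternionGroup m)).Adj] :
    Matrix.reindex (qEquiv m hm) (qEquiv m hm)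
        ((commutingGraph (QuaternionGroup m)).adjMatrix ℝ)
      = Matrix.fromBlocks
          (Matrix.of fun i j : {i : ZMod (2*m) // ¬(i = 0 ∨ i = (m : ZMod (2*m)))} =>
            if i = j then (0:ℝ) else 1)
          0 0
          (Matrix.of fun i j : ZMod (2*m) => if j = i + m then (1:ℝ) else 0) := by
  have hm1 : 1 ≤ m := by omega
  have hAdj : ∀ v w : {x : QuaternionGroup m // x ∉ Subgroup.center (QuaternionGroup m)},
      (commutingGraph (QuaternionGroup m)).Adj v w ↔
        ((v : QuaternionGroup m) ≠ w ∧
          (v : QuaternionGroup m) * w = (w : QuaternionGroup m) * v) := by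
    intro v w
    rw [commutingGraph_adj, ← Subtype.coe_ne_coe]
  ext p q
  rw [Matrix.reindex_apply, Matrix.submatrix_apply, SimpleGraph.adjMatrix_apply]
  rcases p with ⟨i, hi⟩ | i <;> rcases q with ⟨j, hj⟩ | j
  · -- a i vs a j
    have hv : ((qEquiv m hm).symm (Sum.inl ⟨i, hi⟩) : QuaternionGroup m) = a i := rfl
    have hw : ((qEquiv m hm).symm (Sum.inl ⟨j, hj⟩) : QuaternionGroup m) = a j := rfl
    simp only [hAdj, hv, hw, Matrix.fromBlocks_apply₁₁, Matrix.of_apply]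
    split_ifs with hP hQ hQ
    · exact absurd (congrArg a (congrArg Subtype.val hQ)) hP.1
    · rfl
    · rfl
    · refine absurd ⟨fun hc => hQ (Subtype.ext (by injection hc)), ?_⟩ hP
      rw [a_mul_a, a_mul_a, add_comm]
  · -- a i vs xa j
    have hv : ((qEquiv m hm).symm (Sum.inl ⟨i, hi⟩) : QuaternionGroup m) = a i := rfl
    have hw : ((qEquiv m hm).symm (Sum.inr j) : QuaternionGroup m) = xa j := rfl
    simp only [hAdj, hv, hw, Matrix.fromBlocks_apply₁₂, Matrix.zero_apply]
    rw [if_neg]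
    rintro ⟨-, hc⟩
    rw [a_mul_xa, xa_mul_a] at hc
    have h2 : j - i = j + i := by injection hc
    have h3 : i + i = 0 := by linear_combination -h2
    exact hi ((zmod_add_self_eq_zero_iff m hm1 i).mp h3)
  · -- xa i vs a j
    have hv : ((qEquiv m hm).symm (Sum.inr i) : QuaternionGroup m) = xa i := rfl
    have hw : ((qEquiv m hm).symm (Sum.inl ⟨j, hj⟩) : QuaternionGroup m) = a j := rfl
    simp only [hAdj, hv, hw, Matrix.fromBlocks_apply₂₁, Matrix.zero_apply]
    rw [if_neg]
    rintro ⟨-, hc⟩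
    rw [xa_mul_a, a_mul_xa] at hc
    have h2 : i + j = i - j := by injection hc
    have h3 : j + j = 0 := by linear_combination h2
    exact hj ((zmod_add_self_eq_zero_iff m hm1 j).mp h3)
  · -- xa i vs xa j
    have hv : ((qEquiv m hm).symm (Sum.inr i) : QuaternionGroup m) = xa i := rfl
    have hw : ((qEquiv m hm).symm (Sum.inr j) : QuaternionGroup m) = xa j := rfl
    simp only [hAdj, hv, hw, Matrix.fromBlocks_apply₂₂, Matrix.of_apply]
    split_ifs with hP hQ hQ
    · rfl
    · exfalso
      obtain ⟨hne, hc⟩ := hP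
      rw [xa_mul_xa, xa_mul_xa] at hc
      have h2 : (m : ZMod (2*m)) + j - i = m + i - j := by injection hc
      have h3 : (j - i) + (j - i) = 0 := by linear_combination h2
      rcases (zmod_add_self_eq_zero_iff m hm1 (j - i)).mp h3 with h4 | h4
      · have : j = i := by linear_combination h4
        exact hne (by rw [this])
      · exact hQ (by linear_combination h4)
    · exfalso
      apply hP
      constructor
      · intro hc
        have h5 : i = j := by injection hc
        rw [hQ] at h5
        exact zmod_m_ne_zero m hm1 (by linear_combination -h5)
      · rw [xa_mul_xa, xa_mul_xa, hQ]
        congr 1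
        have := zmod_m_add_m m
        linear_combination this
    · rfl

lemma quat_charpoly_eq (m : ℕ) [NeZero m] (hm : 2 ≤ m)
    [instE : DecidableEq {x : QuaternionGroup m // x ∉ Subgroup.center (QuaternionGroup m)}]
    [instF : Fintype {x : QuaternionGroup m // x ∉ Subgroup.center (QuaternionGroup m)}]
    [instD : DecidableRel (commutingGraph (QuaternionGroup m)).Adj] :
    ((commutingGraph (QuaternionGroup m)).adjMatrix ℝ).charpoly =
      (X + 1) ^ (3 * m - 3) * (X - 1) ^ m * (X - C (2 * (m : ℝ) - 3)) := by
  haveI : NeZero (2*m) := ⟨by omega⟩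
  have hm1 : 1 ≤ m := by omega
  have cardT : Fintype.card {i : ZMod (2*m) // ¬(i = 0 ∨ i = (m : ZMod (2*m)))} = 2*m - 2 := by
    rw [Fintype.card_subtype]
    have hfil : (Finset.univ.filter fun i : ZMod (2*m) => ¬(i = 0 ∨ i = (m : ZMod (2*m))))
        = Finset.univ \ {0, (m : ZMod (2*m))} := by
      ext x
      simp [not_or]
    rw [hfil, Finset.card_sdiff_of_subset (by simp)]
    rw [Finset.card_insert_of_notMem (by simp [Ne.symm (zmod_m_ne_zero m hm1)]),
      Finset.card_singleton, Finset.card_univ, ZMod.card]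
  rw [← Matrix.charpoly_reindex (qEquiv m hm), adj_reindex m hm,
    Matrix.charpoly_fromBlocks_zero₁₂]
  rw [charpoly_complete (by rw [cardT]; omega)]
  rw [charpoly_involution _ (fun i : ZMod (2*m) => if i.val < m then (1:ℝ) else -1) m
    (by rw [ZMod.card]) ?hB ?hs ?hsB]
  case hB =>
    ext i j
    rw [Matrix.mul_apply, Finset.sum_eq_single (i + m)]
    · have : i + (m : ZMod (2*m)) + m = i := by
        have := zmod_m_add_m m
        linear_combination this
      simp only [Matrix.of_apply, if_pos rfl, one_mul, this, Matrix.one_apply]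
      simp [eq_comm]
    · intro b _ hb
      simp [Matrix.of_apply, hb]
    · simp
  case hs =>
    intro i
    split_ifs <;> norm_num
  case hsB =>
    intro i j
    by_cases hj : j = i + m
    · subst hj
      have hvm : ((m : ZMod (2*m))).val = m := ZMod.val_natCast_of_lt (by omega)
      have hval : (i + (m : ZMod (2*m))).val = (i.val + m) % (2*m) := by
        rw [ZMod.val_add, hvm]
      have hlt : i.val < 2*m := ZMod.val_lt i
      simp only [Matrix.of_apply, if_pos rfl, mul_one]
      rcases lt_or_ge i.val m with h | h
      · have hv2 : (i + (m : ZMod (2*m))).val = i.val + m := by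
          rw [hval]; exact Nat.mod_eq_of_lt (by omega)
        rw [if_pos h, if_neg (show ¬((i + (m:ZMod (2*m))).val < m) by omega)]
        norm_num
      · have hv2 : (i + (m : ZMod (2*m))).val = i.val - m := by
          rw [hval, Nat.mod_eq_sub_mod (by omega),
            show i.val + m - 2*m = i.val - m from by omega]
          exact Nat.mod_eq_of_lt (by omega)
        rw [if_neg (show ¬(i.val < m) by omega),
          if_pos (show (i + (m:ZMod (2*m))).val < m by omega)]
        norm_num
    · simp [Matrix.of_apply, hj]
  rw [cardT]
  have hcast : ((2*m - 2 : ℕ) : ℝ) - 1 = 2 * (m : ℝ) - 3 := by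
    have : ((2*m - 2 : ℕ) : ℝ) = 2 * (m : ℝ) - 2 := by
      push_cast [Nat.cast_sub (show 2 ≤ 2*m by omega)]
      ring
    rw [this]; ring
  rw [hcast, show 2*m - 2 - 1 = 2*m - 3 from by omega,
    show (3:ℕ)*m - 3 = (2*m - 3) + m from by omega, pow_add, mul_pow]
  ring

lemma charpoly_adj_congr {V : Type*} (G : SimpleGraph V)
    {d1 d2 : DecidableRel G.Adj} {e1 e2 : DecidableEq V} {f1 f2 : Fintype V} :
    @Matrix.charpoly ℝ _ V e1 f1 (@SimpleGraph.adjMatrix ℝ V G d1 _ _)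
      = @Matrix.charpoly ℝ _ V e2 f2 (@SimpleGraph.adjMatrix ℝ V G d2 _ _) := by
  have hd : d1 = d2 := funext fun a => funext fun b => Subsingleton.elim _ _
  have he : e1 = e2 := funext fun a => funext fun b => Subsingleton.elim _ _
  have hf : f1 = f2 := Subsingleton.elim _ _
  cases hd; cases he; cases hf
  rfl

theorem commuting_integral_quaternion
    (m : ℕ) [NeZero m] (hm : 2 ≤ m) :
    commCharpoly (QuaternionGroup m) =
        (X + 1) ^ (3 * m - 3) * (X - 1) ^ m * (X - C (2 * (m : ℝ) - 3)) ∧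
      ∀ μ : ℝ, (commCharpoly (QuaternionGroup m)).IsRoot μ → ∃ k : ℤ, μ = (k : ℝ) := by
  have h1 : commCharpoly (QuaternionGroup m) =
      (X + 1) ^ (3 * m - 3) * (X - 1) ^ m * (X - C (2 * (m : ℝ) - 3)) := by
    classical
    unfold commCharpoly
    exact (charpoly_adj_congr _).trans (quat_charpoly_eq m hm)
  refine ⟨h1, fun μ hroot => ?_⟩
  rw [h1] at hroot
  simp only [IsRoot, eval_mul, eval_pow, eval_add, eval_sub, eval_X, eval_one, eval_C,
    mul_eq_zero, pow_eq_zero_iff'] at hroot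
  rcases hroot with (⟨h, -⟩ | ⟨h, -⟩) | h
  · exact ⟨-1, by push_cast; linarith⟩
  · exact ⟨1, by push_cast; linarith⟩
  · refine ⟨2 * (m : ℤ) - 3, ?_⟩
    push_cast
    linarith
end

section
/- Let n ≥ 1 and let G be a group of order 6n generated by elements a and b satisfying a^(2n) = 1, b³ = 1, and a⁻¹·b·a = b⁻¹ (the group U_{6n}). Then the characteristic polynomial of the adjacency matrix of the commuting graph Γ_G (over the reals) equals (X + 1)^(5n − 4) · (X − (n − 1))^3 · (X − (2n − 1)); in particular G is commuting integral. -/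
open Polynomial

section Prelims
open Matrix

section ClusterMatrix

variable {V I : Type*} [Fintype V] [DecidableEq V] [Fintype I] [DecidableEq I]

lemma cluster_det (c : V → I) (hc : Function.Surjective c) (t : ℝ) (ht : t + 1 ≠ 0)
    (A : Matrix V V ℝ) (hA : ∀ x y, A x y = if x ≠ y ∧ c x = c y then 1 else 0) :
    det (t • (1 : Matrix V V ℝ) - A) =
      (t+1) ^ (Fintype.card V - Fintype.card I) *
        ∏ i : I, (t + 1 - (Fintype.card {x // c x = i} : ℝ)) := by
  classical
  set s := t + 1 with hs
  set m : I → ℝ := fun i => (Fintype.card {x // c x = i} : ℝ) with hm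
  set M : Matrix V I ℝ := Matrix.of fun x i => if c x = i then 1 else 0 with hM
  have hMMt : M * Mᵀ = A + 1 := by
    ext x y
    simp only [Matrix.mul_apply, hM, Matrix.transpose_apply, Matrix.of_apply, Matrix.add_apply,
      Matrix.one_apply, hA]
    rw [Finset.sum_eq_single (c x)]
    · by_cases h : x = y <;> by_cases h2 : c x = c y <;> simp [h, h2, eq_comm]
    · intro i _ hi; simp [Ne.symm hi]
    · simp
  have hMtM : Mᵀ * M = Matrix.diagonal m := by
    ext i j
    simp only [Matrix.mul_apply, hM, Matrix.transpose_apply, Matrix.of_apply,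
      Matrix.diagonal_apply, hm]
    by_cases h : i = j
    · subst h
      simp only [if_pos rfl, Fintype.card_subtype]
      rw [← Finset.sum_boole]
      congr 1; ext x; by_cases h : c x = i <;> simp [h]
    · rw [if_neg h]
      apply Finset.sum_eq_zero
      intro x _
      by_cases h1 : c x = i
      · have h2 : c x ≠ j := fun h2 => h (h1.symm.trans h2)
        simp [h2]
      · simp [h1]
  have hA' : A = M * Mᵀ - 1 := by rw [hMMt]; abel
  have key : t • (1 : Matrix V V ℝ) - A = s • (1 + ((-s⁻¹) • M) * Mᵀ) := by
    rw [hA']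
    ext x y
    by_cases h : x = y <;>
      simp [h, Matrix.sub_apply, Matrix.smul_apply, Matrix.add_apply, Matrix.one_apply,
        Matrix.smul_mul, smul_smul] <;> field_simp <;> ring
  rw [key, det_smul, det_one_add_mul_comm, Matrix.mul_smul, hMtM]
  have hdiag : (1 : Matrix I I ℝ) + (-s⁻¹) • Matrix.diagonal m
      = Matrix.diagonal (fun i => 1 - s⁻¹ * m i) := by
    ext i j
    rcases eq_or_ne i j with rfl | h
    · simp [Matrix.one_apply]; ring
    · simp [Matrix.diagonal_apply_ne _ h, Matrix.one_apply_ne h]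
  rw [hdiag, det_diagonal]
  have hk : Fintype.card I ≤ Fintype.card V := Fintype.card_le_of_surjective c hc
  conv_lhs => rw [show Fintype.card V = (Fintype.card V - Fintype.card I) + Fintype.card I from
    (Nat.sub_add_cancel hk).symm]
  rw [pow_add, mul_assoc]
  congr 1
  rw [← Finset.card_univ, ← Finset.prod_const, ← Finset.prod_mul_distrib]
  apply Finset.prod_congr rfl
  intro i _
  field_simp
  rfl

lemma cluster_charpoly (c : V → I) (hc : Function.Surjective c)
    (A : Matrix V V ℝ) (hA : ∀ x y, A x y = if x ≠ y ∧ c x = c y then 1 else 0) :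
    A.charpoly = (X + 1) ^ (Fintype.card V - Fintype.card I) *
        ∏ i : I, (X - C ((Fintype.card {x // c x = i} : ℝ) - 1)) := by
  classical
  apply Polynomial.eq_of_infinite_eval_eq
  apply Set.Infinite.mono (s := {(-1 : ℝ)}ᶜ)
  swap
  · exact Set.Finite.infinite_compl (Set.finite_singleton _)
  intro t ht
  have ht' : t + 1 ≠ 0 := by
    simp only [Set.mem_compl_iff, Set.mem_singleton_iff] at ht
    intro h; apply ht; linarith
  have h1 : eval t A.charpoly = det (t • (1 : Matrix V V ℝ) - A) := by
    rw [Matrix.charpoly]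
    rw [show eval t A.charmatrix.det = (evalRingHom t) A.charmatrix.det from rfl,
      RingHom.map_det]
    congr 1
    ext i j
    simp only [RingHom.mapMatrix_apply, Matrix.map_apply, coe_evalRingHom]
    rcases eq_or_ne i j with rfl | h
    · simp [Matrix.charmatrix_apply_eq, Matrix.sub_apply, Matrix.one_apply, Matrix.smul_apply]
    · simp [Matrix.charmatrix_apply_ne _ _ _ h, Matrix.sub_apply, Matrix.one_apply_ne h,
        Matrix.smul_apply]
  simp only [Set.mem_setOf_eq, h1, cluster_det c hc t ht' A hA, eval_mul, eval_pow, eval_prod,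
    eval_add, eval_sub, eval_X, eval_one, eval_C]
  congr 1
  apply Finset.prod_congr rfl
  intro i _
  ring

end ClusterMatrix

lemma pow2mod3 : ∀ i : ℕ, 2 ^ i % 3 = if Even i then 1 else 2 := by
  intro i
  induction i with
  | zero => simp
  | succ k ih =>
    rw [pow_succ, Nat.mul_mod, ih]
    by_cases h : Even k <;> simp [h, Nat.even_add_one]

section U6nGroup

variable {G : Type*} [Group G] [Fintype G] {n : ℕ} {a b : G}

omit [Fintype G] in
lemma U_binv (hb : b ^ 3 = 1) : b⁻¹ = b ^ 2 :=
  inv_eq_of_mul_eq_one_right (by rw [← pow_succ']; exact hb)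

omit [Fintype G] in
lemma U_swap (hb : b ^ 3 = 1) (hrel : a⁻¹ * b * a = b⁻¹) :
    ∀ k j : ℕ, b ^ j * a ^ k = a ^ k * b ^ (j * 2 ^ k) := by
  have h1 : ∀ m : ℕ, b ^ m * a = a * b ^ (2 * m) := by
    intro m
    have hc : a⁻¹ * b ^ m * a = b ^ (2 * m) := by
      have h := conj_pow (i := m) (a := a⁻¹) (b := b)
      rw [inv_inv, hrel, U_binv hb] at h
      rw [← h, ← pow_mul]
    calc b ^ m * a = a * (a⁻¹ * b ^ m * a) := by group
    _ = a * b ^ (2 * m) := by rw [hc]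
  intro k
  induction k with
  | zero => simp
  | succ k ih =>
    intro j
    calc b ^ j * a ^ (k + 1) = b ^ j * a ^ k * a := by rw [pow_succ, mul_assoc]
    _ = a ^ k * (b ^ (j * 2 ^ k) * a) := by rw [ih j, mul_assoc]
    _ = a ^ k * (a * b ^ (2 * (j * 2 ^ k))) := by rw [h1]
    _ = a ^ (k + 1) * b ^ (j * 2 ^ (k + 1)) := by
        rw [← mul_assoc, ← pow_succ]
        congr 2
        ring

omit [Fintype G] in
lemma U_bred (hb : b ^ 3 = 1) : ∀ j : ℕ, b ^ j = b ^ (j % 3) := by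
  intro j
  conv_lhs => rw [← Nat.div_add_mod j 3]
  rw [pow_add, pow_mul, hb, one_pow, one_mul]

omit [Fintype G] in
lemma U_exists (hn : 1 ≤ n) (ha : a ^ (2 * n) = 1) (hb : b ^ 3 = 1)
    (hrel : a⁻¹ * b * a = b⁻¹) (hgen : Subgroup.closure ({a, b} : Set G) = ⊤) :
    ∀ g : G, ∃ i j : ℕ, i < 2 * n ∧ j < 3 ∧ g = a ^ i * b ^ j := by
  have hared : ∀ i : ℕ, a ^ i = a ^ (i % (2 * n)) := by
    intro i
    conv_lhs => rw [← Nat.div_add_mod i (2 * n)]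
    rw [pow_add, pow_mul, ha, one_pow, one_mul]
  have main : ∀ g : G, ∃ i j : ℕ, g = a ^ i * b ^ j := by
    intro g
    have hg : g ∈ Subgroup.closure ({a, b} : Set G) := by rw [hgen]; exact Subgroup.mem_top g
    induction hg using Subgroup.closure_induction with
    | mem x hx =>
      rcases hx with rfl | hx
      · exact ⟨1, 0, by simp⟩
      · rw [Set.mem_singleton_iff] at hx
        exact ⟨0, 1, by simp [hx]⟩
    | one => exact ⟨0, 0, by simp⟩
    | mul x y hx hy ihx ihy =>
      obtain ⟨i, j, rfl⟩ := ihx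
      obtain ⟨k, l, rfl⟩ := ihy
      refine ⟨i + k, j * 2 ^ k + l, ?_⟩
      rw [mul_assoc, ← mul_assoc (b ^ j), U_swap hb hrel, pow_add, pow_add]
      group
    | inv x hx ihx =>
      obtain ⟨i, j, rfl⟩ := ihx
      refine ⟨i * (2 * n - 1), 2 * j * 2 ^ (i * (2 * n - 1)), ?_⟩
      rw [_root_.mul_inv_rev, ← U_swap hb hrel]
      congr 1
      · rw [← inv_pow, U_binv hb, ← pow_mul]
      · have harith : i + i * (2 * n - 1) = 2 * n * i := by
          have h2 : 2 * n - 1 + 1 = 2 * n := by omega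
          calc i + i * (2 * n - 1) = i * (2 * n - 1 + 1) := by ring
          _ = 2 * n * i := by rw [h2]; ring
        have h1 : a ^ i * a ^ (i * (2 * n - 1)) = 1 := by
          rw [← pow_add, harith, pow_mul, ha, one_pow]
        exact inv_eq_of_mul_eq_one_right h1
  intro g
  obtain ⟨i, j, rfl⟩ := main g
  exact ⟨i % (2 * n), j % 3, Nat.mod_lt _ (by omega), Nat.mod_lt _ (by omega),
    by rw [← hared, ← U_bred hb]⟩

/-- The canonical enumeration of `U_{6n}`. -/
def Uf {G : Type*} [Group G] (a b : G) (n : ℕ) : Fin (2 * n) × Fin 3 → G :=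
  fun p => a ^ (p.1 : ℕ) * b ^ (p.2 : ℕ)

lemma Uf_bij (hn : 1 ≤ n) (hcard : Nat.card G = 6 * n) (ha : a ^ (2 * n) = 1)
    (hb : b ^ 3 = 1) (hrel : a⁻¹ * b * a = b⁻¹)
    (hgen : Subgroup.closure ({a, b} : Set G) = ⊤) :
    Function.Bijective (Uf a b n) := by
  rw [Nat.bijective_iff_surjective_and_card]
  constructor
  · intro g
    obtain ⟨i, j, hi, hj, rfl⟩ := U_exists hn ha hb hrel hgen g
    exact ⟨(⟨i, hi⟩, ⟨j, hj⟩), rfl⟩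
  · rw [hcard]
    simp [Nat.card_eq_fintype_card]
    ring

lemma U_unique (hn : 1 ≤ n) (hbij : Function.Bijective (Uf a b n)) :
    ∀ i j k l : ℕ, i < 2 * n → j < 3 → k < 2 * n → l < 3 →
      a ^ i * b ^ j = a ^ k * b ^ l → i = k ∧ j = l := by
  intro i j k l hi hj hk hl heq
  have := hbij.injective (a₁ := (⟨i, hi⟩, ⟨j, hj⟩)) (a₂ := (⟨k, hk⟩, ⟨l, hl⟩)) heq
  rw [Prod.ext_iff] at this
  exact ⟨congrArg Fin.val this.1, congrArg Fin.val this.2⟩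

lemma U_bpow_inj (hn : 1 ≤ n) (hbij : Function.Bijective (Uf a b n)) :
    ∀ j l : ℕ, j < 3 → l < 3 → b ^ j = b ^ l → j = l := by
  intro j l hj hl heq
  have h0 : (0 : ℕ) < 2 * n := by omega
  exact (U_unique hn hbij 0 j 0 l h0 hj h0 hl (by simpa using heq)).2

lemma U_commute_iff (hn : 1 ≤ n) (hb : b ^ 3 = 1) (hrel : a⁻¹ * b * a = b⁻¹)
    (hbij : Function.Bijective (Uf a b n)) :
    ∀ i j k l : ℕ, i < 2 * n → j < 3 → k < 2 * n → l < 3 →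
      ((a ^ i * b ^ j) * (a ^ k * b ^ l) = (a ^ k * b ^ l) * (a ^ i * b ^ j) ↔
        (j * 2 ^ k + l) % 3 = (l * 2 ^ i + j) % 3) := by
  intro i j k l hi hj hk hl
  have e1 : (a ^ i * b ^ j) * (a ^ k * b ^ l) = a ^ (i + k) * b ^ (j * 2 ^ k + l) := by
    rw [mul_assoc, ← mul_assoc (b ^ j), U_swap hb hrel, pow_add, pow_add]
    group
  have e2 : (a ^ k * b ^ l) * (a ^ i * b ^ j) = a ^ (k + i) * b ^ (l * 2 ^ i + j) := by
    rw [mul_assoc, ← mul_assoc (b ^ l), U_swap hb hrel, pow_add, pow_add]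
    group
  rw [e1, e2, add_comm k i]
  constructor
  · intro h
    have hbeq : b ^ (j * 2 ^ k + l) = b ^ (l * 2 ^ i + j) := mul_left_cancel h
    rw [U_bred hb, U_bred hb (l * 2 ^ i + j)] at hbeq
    exact U_bpow_inj hn hbij _ _ (Nat.mod_lt _ (by omega)) (Nat.mod_lt _ (by omega)) hbeq
  · intro h
    congr 1
    rw [U_bred hb, U_bred hb (l * 2 ^ i + j), h]

lemma U_center (hn : 1 ≤ n) (hb : b ^ 3 = 1) (hrel : a⁻¹ * b * a = b⁻¹)
    (hgen : Subgroup.closure ({a, b} : Set G) = ⊤)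
    (hbij : Function.Bijective (Uf a b n)) :
    ∀ i j : ℕ, i < 2 * n → j < 3 →
      (a ^ i * b ^ j ∈ Subgroup.center G ↔ (Even i ∧ j = 0)) := by
  intro i j hi hj
  constructor
  · intro hz
    have hcomm := Subgroup.mem_center_iff.mp hz
    have h1 := hcomm a
    have e1 : a * (a ^ i * b ^ j) = a ^ (i + 1) * b ^ j := by
      rw [← mul_assoc, ← pow_succ']
    have e2 : (a ^ i * b ^ j) * a = a ^ (i + 1) * b ^ (j * 2) := by
      have h := U_swap hb hrel 1 j
      rw [pow_one] at h
      rw [mul_assoc, h, ← mul_assoc, ← pow_succ]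
      norm_num
    rw [e1, e2] at h1
    have hbeq : b ^ (j * 2) = b ^ j := mul_left_cancel h1.symm
    rw [U_bred hb (j * 2)] at hbeq
    have hj0 : j = 0 := by
      have := U_bpow_inj hn hbij _ _ (Nat.mod_lt _ (by omega)) hj hbeq
      omega
    subst hj0
    refine ⟨?_, rfl⟩
    have h2 := hcomm b
    rw [pow_zero, mul_one] at h2
    have e3 : b * a ^ i = a ^ i * b ^ (1 * 2 ^ i) := by
      have h := U_swap hb hrel i 1
      rw [pow_one] at h
      exact h
    rw [e3] at h2
    have hbeq2 : b ^ (1 * 2 ^ i) = b ^ 1 := by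
      have h := mul_left_cancel h2.symm
      rw [pow_one]
      exact h.symm
    rw [U_bred hb (1 * 2 ^ i), one_mul, pow2mod3] at hbeq2
    by_contra hodd
    rw [if_neg hodd] at hbeq2
    have := U_bpow_inj hn hbij 2 1 (by omega) (by omega) hbeq2
    omega
  · rintro ⟨hev, rfl⟩
    rw [pow_zero, mul_one]
    rw [Subgroup.mem_center_iff]
    intro g
    have hg : g ∈ Subgroup.closure ({a, b} : Set G) := by rw [hgen]; exact Subgroup.mem_top g
    have hsub : Subgroup.closure ({a, b} : Set G) ≤ Subgroup.centralizer {a ^ i} := by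
      rw [Subgroup.closure_le]
      intro x hx
      rcases hx with rfl | hx
      · rw [SetLike.mem_coe, Subgroup.mem_centralizer_iff]
        intro s hs
        rw [Set.mem_singleton_iff] at hs
        subst hs
        rw [← pow_succ, ← pow_succ']
      · rw [Set.mem_singleton_iff] at hx
        subst hx
        rw [SetLike.mem_coe, Subgroup.mem_centralizer_iff]
        intro s hs
        rw [Set.mem_singleton_iff] at hs
        subst hs
        have e3 := U_swap hb hrel i 1
        rw [pow_one, one_mul] at e3
        have hb2 : x ^ (2 ^ i) = x := by
          rw [U_bred hb, pow2mod3, if_pos hev, pow_one]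
        rw [hb2] at e3
        exact e3.symm
    have hmem := hsub hg
    rw [Subgroup.mem_centralizer_iff] at hmem
    exact (hmem _ (Set.mem_singleton _)).symm

end U6nGroup

end Prelims



open Polynomial

theorem commuting_integral_U6n
    (n : ℕ) (hn : 1 ≤ n)
    (G : Type*) [Group G] [Fintype G] (a b : G)
    (hcard : Nat.card G = 6 * n)
    (ha : a ^ (2 * n) = 1) (hb : b ^ 3 = 1) (hrel : a⁻¹ * b * a = b⁻¹)
    (hgen : Subgroup.closure ({a, b} : Set G) = ⊤) :
    commCharpoly G =
        (X + 1) ^ (5 * n - 4) *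
          (X - C ((n : ℝ) - 1)) ^ 3 *
          (X - C (2 * (n : ℝ) - 1)) ∧
      ∀ μ : ℝ, (commCharpoly G).IsRoot μ → ∃ k : ℤ, μ = (k : ℝ) := by
  classical
  have h2n : 0 < 2 * n := by omega
  have hbij : Function.Bijective (Uf a b n) := Uf_bij hn hcard ha hb hrel hgen
  set e : Fin (2 * n) × Fin 3 ≃ G := Equiv.ofBijective _ hbij with he
  have hidx1 : ∀ g : G, a ^ ((e.symm g).1 : ℕ) * b ^ ((e.symm g).2 : ℕ) = g :=
    fun g => e.apply_symm_apply g
  have hidx2 : ∀ p : Fin (2 * n) × Fin 3, e.symm (a ^ (p.1 : ℕ) * b ^ (p.2 : ℕ)) = p :=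
    fun p => e.symm_apply_apply p
  have hcen := U_center hn hb hrel hgen hbij
  have hodd : ∀ m : ℕ, Odd m → ¬ Even m := fun m hm => (Nat.not_even_iff_odd.mpr hm)
  -- the class function on G
  set F : G → Fin 4 := fun g =>
    if Even ((e.symm g).1 : ℕ) then (3 : Fin 4) else Fin.castSucc (e.symm g).2 with hF
  set c : {x : G // x ∉ Subgroup.center G} → Fin 4 := fun x => F (x : G) with hc
  have hFval : ∀ (i j : ℕ) (hi : i < 2 * n) (hj : j < 3),
      F (a ^ i * b ^ j) = if Even i then (3 : Fin 4) else Fin.castSucc ⟨j, hj⟩ := by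
    intro i j hi hj
    simp only [hF]
    rw [show e.symm (a ^ i * b ^ j) = (⟨i, hi⟩, ⟨j, hj⟩) from hidx2 (⟨i, hi⟩, ⟨j, hj⟩)]
  have hnorm : ∀ u v w : ℕ, (u * 2 ^ v + w) % 3 = (u * (if Even v then 1 else 2) + w) % 3 := by
    intro u v w
    rcases Nat.even_or_odd v with hv | hv
    · have h := pow2mod3 v
      rw [if_pos hv] at h
      rw [if_pos hv]
      conv_lhs => rw [Nat.add_mod, Nat.mul_mod, h]
      conv_rhs => rw [Nat.add_mod, Nat.mul_mod]
    · have h := pow2mod3 v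
      rw [if_neg (hodd _ hv)] at h
      rw [if_neg (hodd _ hv)]
      conv_lhs => rw [Nat.add_mod, Nat.mul_mod, h]
      conv_rhs => rw [Nat.add_mod, Nat.mul_mod]
  -- commuting iff same class
  have key : ∀ x y : {x : G // x ∉ Subgroup.center G},
      ((x : G) * y = (y : G) * x ↔ c x = c y) := by
    intro x y
    obtain ⟨i, j, hi, hj, hx⟩ : ∃ i j, i < 2 * n ∧ j < 3 ∧ (x : G) = a ^ i * b ^ j :=
      ⟨_, _, (e.symm (x : G)).1.isLt, (e.symm (x : G)).2.isLt, (hidx1 _).symm⟩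
    obtain ⟨k, l, hk, hl, hy⟩ : ∃ k l, k < 2 * n ∧ l < 3 ∧ (y : G) = a ^ k * b ^ l :=
      ⟨_, _, (e.symm (y : G)).1.isLt, (e.symm (y : G)).2.isLt, (hidx1 _).symm⟩
    have hxnc : ¬ (Even i ∧ j = 0) := fun hh => x.2 (by rw [hx]; exact (hcen i j hi hj).mpr hh)
    have hync : ¬ (Even k ∧ l = 0) := fun hh => y.2 (by rw [hy]; exact (hcen k l hk hl).mpr hh)
    rw [hx, hy, U_commute_iff hn hb hrel hbij i j k l hi hj hk hl, hnorm, hnorm]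
    simp only [hc]
    rw [hx, hy, hFval i j hi hj, hFval k l hk hl]
    rcases Nat.even_or_odd i with hpe | hpo <;> rcases Nat.even_or_odd k with hqe | hqo
    · simp only [if_pos hpe, if_pos hqe]
      apply iff_of_true
      · omega
      · trivial
    · simp only [if_pos hpe, if_neg (hodd _ hqo)]
      apply iff_of_false
      · have hj0 : j ≠ 0 := fun h => hxnc ⟨hpe, h⟩
        omega
      · intro hcontra
        have hv : (3 : ℕ) = l := congrArg Fin.val hcontra
        omega
    · simp only [if_neg (hodd _ hpo), if_pos hqe]
      apply iff_of_false
      · have hl0 : l ≠ 0 := fun h => hync ⟨hqe, h⟩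
        omega
      · intro hcontra
        have hv : (j : ℕ) = 3 := congrArg Fin.val hcontra
        omega
    · simp only [if_neg (hodd _ hpo), if_neg (hodd _ hqo)]
      constructor
      · intro h
        have hjl : j = l := by omega
        exact congrArg Fin.castSucc (Fin.ext hjl)
      · intro h
        have hjl : j = l := congrArg Fin.val h
        omega
  -- adjacency matrix entries
  have hAentry : ∀ x y, (commutingGraph G).adjMatrix ℝ x y
      = if x ≠ y ∧ c x = c y then 1 else 0 := by
    intro x y
    rw [SimpleGraph.adjMatrix_apply]
    refine if_congr ?_ rfl rfl
    show (x ≠ y ∧ (x : G) * y = (y : G) * x) ↔ _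
    exact and_congr_right fun _ => key x y
  -- surjectivity of the class function
  have h1lt : (1 : ℕ) < 2 * n := by omega
  have hsurj : Function.Surjective c := by
    have hmk : ∀ (i j : ℕ) (hi : i < 2 * n) (hj : j < 3), ¬ (Even i ∧ j = 0) →
        ∃ x : {x : G // x ∉ Subgroup.center G}, (x : G) = a ^ i * b ^ j := by
      intro i j hi hj hnc
      refine ⟨⟨a ^ i * b ^ j, ?_⟩, rfl⟩
      rw [hcen i j hi hj]
      exact hnc
    intro v
    fin_cases v
    · obtain ⟨x, hx⟩ := hmk 1 0 h1lt (by omega) (by simp [Nat.even_iff])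
      refine ⟨x, ?_⟩
      simp only [hc]
      rw [hx, hFval 1 0 h1lt (by omega), if_neg (by simp [Nat.even_iff])]
      rfl
    · obtain ⟨x, hx⟩ := hmk 1 1 h1lt (by omega) (by simp [Nat.even_iff])
      refine ⟨x, ?_⟩
      simp only [hc]
      rw [hx, hFval 1 1 h1lt (by omega), if_neg (by simp [Nat.even_iff])]
      rfl
    · obtain ⟨x, hx⟩ := hmk 1 2 h1lt (by omega) (by simp [Nat.even_iff])
      refine ⟨x, ?_⟩
      simp only [hc]
      rw [hx, hFval 1 2 h1lt (by omega), if_neg (by simp [Nat.even_iff])]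
      rfl
    · obtain ⟨x, hx⟩ := hmk 0 1 h2n (by omega) (by simp)
      refine ⟨x, ?_⟩
      simp only [hc]
      rw [hx, hFval 0 1 h2n (by omega), if_pos (Even.zero)]
      rfl
  -- cardinalities on Fin (2*n)
  have cardEven : Fintype.card {i : Fin (2 * n) // Even (i : ℕ)} = n := by
    have eqv : {i : Fin (2 * n) // Even (i : ℕ)} ≃ Fin n := by
      refine ⟨fun x => ⟨(x.1 : ℕ) / 2, by have := x.1.isLt; omega⟩,
        fun q => ⟨⟨2 * (q : ℕ), by have := q.isLt; omega⟩,
          ⟨(q : ℕ), by show 2 * (q : ℕ) = (q : ℕ) + (q : ℕ); ring⟩⟩, ?_, ?_⟩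
      · rintro ⟨⟨v, hv⟩, hev⟩
        have hv2 : v % 2 = 0 := Nat.even_iff.mp hev
        apply Subtype.ext
        apply Fin.ext
        show 2 * (v / 2) = v
        omega
      · rintro ⟨q, hq⟩
        apply Fin.ext
        show 2 * q / 2 = q
        omega
    rw [Fintype.card_congr eqv, Fintype.card_fin]
  have cardOdd : Fintype.card {i : Fin (2 * n) // ¬ Even (i : ℕ)} = n := by
    have eqv : {i : Fin (2 * n) // ¬ Even (i : ℕ)} ≃ Fin n := by
      refine ⟨fun x => ⟨(x.1 : ℕ) / 2, by have := x.1.isLt; omega⟩,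
        fun q => ⟨⟨2 * (q : ℕ) + 1, by have := q.isLt; omega⟩,
          by show ¬ Even (2 * (q : ℕ) + 1); rw [Nat.even_iff]; omega⟩, ?_, ?_⟩
      · rintro ⟨⟨v, hv⟩, hodd'⟩
        have hv2 : v % 2 = 1 := by
          rcases Nat.even_or_odd v with h | h
          · exact absurd h hodd'
          · exact Nat.odd_iff.mp h
        apply Subtype.ext
        apply Fin.ext
        show 2 * (v / 2) + 1 = v
        omega
      · rintro ⟨q, hq⟩
        apply Fin.ext
        show (2 * q + 1) / 2 = q
        omega
    rw [Fintype.card_congr eqv, Fintype.card_fin]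
  have hcardG : Fintype.card G = 6 * n := by rw [← Nat.card_eq_fintype_card, hcard]
  -- center cardinality
  have hcenter_card : Fintype.card {g : G // g ∈ Subgroup.center G} = n := by
    have hiff : ∀ p : Fin (2 * n) × Fin 3,
        (Even ((p.1 : ℕ)) ∧ p.2 = 0) ↔ e p ∈ Subgroup.center G := by
      intro p
      rw [show e p = a ^ (p.1 : ℕ) * b ^ (p.2 : ℕ) from rfl,
        hcen _ _ p.1.isLt p.2.isLt]
      constructor
      · rintro ⟨h1, h2⟩
        exact ⟨h1, by rw [h2]; rfl⟩
      · rintro ⟨h1, h2⟩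
        exact ⟨h1, Fin.ext h2⟩
    rw [← Fintype.card_congr (Equiv.subtypeEquiv e hiff)]
    rw [Fintype.card_congr (Equiv.subtypeProdEquivProd
      (p := fun i : Fin (2 * n) => Even (i : ℕ)) (q := fun j : Fin 3 => j = 0))]
    rw [Fintype.card_prod, cardEven, Fintype.card_subtype_eq]
    omega
  -- vertex set cardinality
  have hVcard : Fintype.card {x : G // x ∉ Subgroup.center G} = 5 * n := by
    rw [Fintype.card_subtype_compl, hcardG, hcenter_card]
    omega
  -- fiber cardinalities
  have hne2 : Fintype.card {j : Fin 3 // j ≠ 0} = 2 := by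
    rw [Fintype.card_subtype_compl (p := fun j : Fin 3 => j = 0), Fintype.card_subtype_eq]
    rfl
  have hiffv : ∀ (v : Fin 4) (p : Fin (2 * n) × Fin 3),
      ((¬ (Even ((p.1 : ℕ)) ∧ (p.2 : ℕ) = 0)) ∧
        ((if Even ((p.1 : ℕ)) then (3 : Fin 4) else Fin.castSucc p.2) = v))
      ↔ (e p ∉ Subgroup.center G ∧ F (e p) = v) := by
    intro v p
    rw [show e p = a ^ ((p.1 : ℕ)) * b ^ ((p.2 : ℕ)) from rfl,
      hcen _ _ p.1.isLt p.2.isLt, hFval _ _ p.1.isLt p.2.isLt]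
  have hfib : ∀ v : Fin 4,
      Fintype.card {x : {x : G // x ∉ Subgroup.center G} // c x = v}
        = if v = 3 then 2 * n else n := by
    intro v
    simp only [hc]
    rw [Fintype.card_congr (Equiv.subtypeSubtypeEquivSubtypeInter
      (fun g : G => g ∉ Subgroup.center G) (fun g => F g = v))]
    rw [← Fintype.card_congr (Equiv.subtypeEquiv e (hiffv v))]
    by_cases hv3 : v = 3
    · subst hv3
      have hR : ∀ p : Fin (2 * n) × Fin 3,
          ((¬ (Even ((p.1 : ℕ)) ∧ (p.2 : ℕ) = 0)) ∧
            ((if Even ((p.1 : ℕ)) then (3 : Fin 4) else Fin.castSucc p.2) = 3))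
          ↔ (Even ((p.1 : ℕ)) ∧ p.2 ≠ 0) := by
        intro p
        by_cases hp : Even ((p.1 : ℕ))
        · rw [if_pos hp]
          simp only [hp, true_and, and_true, ne_eq, Fin.val_eq_zero_iff]
        · have hcs : Fin.castSucc p.2 ≠ 3 := by
            intro h
            have hval : ((Fin.castSucc p.2 : Fin 4) : ℕ) = 3 := congrArg Fin.val h
            have := p.2.isLt
            rw [Fin.coe_castSucc] at hval
            omega
          simp [hp, hcs]
      rw [Fintype.card_congr (Equiv.subtypeEquivRight hR)]
      rw [Fintype.card_congr (Equiv.subtypeProdEquivProd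
        (p := fun i : Fin (2 * n) => Even (i : ℕ)) (q := fun j : Fin 3 => j ≠ 0))]
      rw [Fintype.card_prod, cardEven, hne2, if_pos rfl]
      ring
    · have hvlt : (v : ℕ) < 3 := by
        have h4 := v.isLt
        have : (v : ℕ) ≠ 3 := fun h => hv3 (Fin.ext h)
        omega
      have hR : ∀ p : Fin (2 * n) × Fin 3,
          ((¬ (Even ((p.1 : ℕ)) ∧ (p.2 : ℕ) = 0)) ∧
            ((if Even ((p.1 : ℕ)) then (3 : Fin 4) else Fin.castSucc p.2) = v))
          ↔ (¬ Even ((p.1 : ℕ)) ∧ p.2 = ⟨(v : ℕ), hvlt⟩) := by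
        intro p
        by_cases hp : Even ((p.1 : ℕ))
        · have h3v : ¬ ((3 : Fin 4) = v) := fun h => hv3 h.symm
          simp [hp, h3v]
        · rw [if_neg hp]
          simp only [hp, false_and, not_false_eq_true, true_and, Fin.ext_iff, Fin.coe_castSucc]
      rw [Fintype.card_congr (Equiv.subtypeEquivRight hR)]
      rw [Fintype.card_congr (Equiv.subtypeProdEquivProd
        (p := fun i : Fin (2 * n) => ¬ Even (i : ℕ))
        (q := fun j : Fin 3 => j = ⟨(v : ℕ), hvlt⟩))]
      rw [Fintype.card_prod, cardOdd, Fintype.card_subtype_eq, if_neg hv3]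
      ring
  -- the characteristic polynomial
  have heq : commCharpoly G =
      (X + 1) ^ (5 * n - 4) * (X - C ((n : ℝ) - 1)) ^ 3 * (X - C (2 * (n : ℝ) - 1)) := by
    unfold commCharpoly
    rw [cluster_charpoly c hsurj _ hAentry]
    rw [hVcard, Fin.prod_univ_four]
    rw [hfib 0, hfib 1, hfib 2, hfib 3]
    rw [if_neg (by decide), if_neg (by decide), if_neg (by decide), if_pos rfl]
    have hc4 : Fintype.card (Fin 4) = 4 := by simp
    rw [hc4]
    have hcast : ((2 * n : ℕ) : ℝ) - 1 = 2 * (n : ℝ) - 1 := by push_cast; ring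
    rw [hcast]
    ring
  refine ⟨heq, ?_⟩
  intro mu hroot
  rw [heq] at hroot
  simp only [Polynomial.IsRoot, eval_mul, eval_pow, eval_sub, eval_add, eval_X, eval_one,
    eval_C, mul_eq_zero, pow_eq_zero_iff'] at hroot
  rcases hroot with (⟨h1, -⟩ | h2) | h3
  · exact ⟨-1, by push_cast; linarith⟩
  · exact ⟨(n : ℤ) - 1, by push_cast; linarith⟩
  · exact ⟨2 * (n : ℤ) - 1, by push_cast; linarith⟩
end

section
/- Let n ≥ 1 and let G be a group of order 6n generated by elements a and b satisfying a^(2n) = 1, b³ = 1, and a⁻¹·b·a = b⁻¹ (the group U_{6n}). Then Z(G) = ⟨a²⟩, |Z(G)| = n, and G/Z(G) is isomorphic to the dihedral group of order 6 (Mathlib's DihedralGroup 3). -/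
open Pointwise

private lemma pow_mod_three' {Q : Type*} [Group Q] {B : Q} (hB : B ^ 3 = 1) (k : ℕ) :
    B ^ k = B ^ (k % 3) := by
  conv_lhs => rw [← Nat.div_add_mod k 3]
  rw [pow_add, pow_mul, hB, one_pow, one_mul]

private lemma pow_eq_of_zmod' {Q : Type*} [Group Q] {B : Q} (hB : B ^ 3 = 1) {m m' : ℕ}
    (h : (m : ZMod 3) = (m' : ZMod 3)) : B ^ m = B ^ m' := by
  rw [pow_mod_three' hB m, pow_mod_three' hB m']
  exact congrArg _ ((ZMod.natCast_eq_natCast_iff m m' 3).1 h)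

theorem center_and_central_quotient_of_U6n
    (n : ℕ) (hn : 1 ≤ n)
    (G : Type*) [Group G] [Finite G] (a b : G)
    (hcard : Nat.card G = 6 * n)
    (ha : a ^ (2 * n) = 1) (hb : b ^ 3 = 1) (hrel : a⁻¹ * b * a = b⁻¹)
    (hgen : Subgroup.closure ({a, b} : Set G) = ⊤) :
    Subgroup.center G = Subgroup.zpowers (a ^ 2) ∧
      Nat.card (Subgroup.center G) = n ∧
      Nonempty ((G ⧸ Subgroup.center G) ≃* DihedralGroup 3) := by
  -- basic relations
  have hba : b * a = a * b⁻¹ := by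
    rw [← hrel]; group
  have hinv : a⁻¹ * b⁻¹ * a = b := by
    rw [show a⁻¹ * b⁻¹ * a = (a⁻¹ * b * a)⁻¹ by group, hrel, inv_inv]
  have hb1a : b⁻¹ * a = a * b := by
    have := congrArg (fun x => a * x) hinv
    simpa [mul_assoc] using this
  -- a^2 is central
  have hb2 : b * a ^ 2 = a ^ 2 * b := by
    calc b * a ^ 2 = b * a * a := by rw [pow_two, mul_assoc]
    _ = a * (b⁻¹ * a) := by rw [hba, mul_assoc]
    _ = a * (a * b) := by rw [hb1a]
    _ = a ^ 2 * b := by rw [pow_two, mul_assoc]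
  have hacen : a ^ 2 ∈ Subgroup.center G := by
    rw [Subgroup.mem_center_iff]
    intro g
    have hg : g ∈ Subgroup.closure ({a, b} : Set G) := by rw [hgen]; trivial
    induction hg using Subgroup.closure_induction with
    | mem x hx =>
      rcases hx with rfl | rfl
      · group
      · exact hb2
    | one => simp
    | mul x y hx hy ihx ihy =>
      calc x * y * a ^ 2 = x * (y * a ^ 2) := by group
      _ = x * (a ^ 2 * y) := by rw [ihy]
      _ = (x * a ^ 2) * y := by group
      _ = a ^ 2 * (x * y) := by rw [ihx]; group
    | inv x hx ihx =>
      have : (x⁻¹ * a ^ 2) * (x * (a ^ 2)⁻¹) = 1 := by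
        rw [show x⁻¹ * a ^ 2 * (x * (a ^ 2)⁻¹) = x⁻¹ * (a ^ 2 * x) * (a ^ 2)⁻¹ by group,
          ← ihx]
        group
      calc x⁻¹ * a ^ 2 = (x * (a ^ 2)⁻¹)⁻¹ := by
            rw [eq_inv_of_mul_eq_one_left this]
      _ = a ^ 2 * x⁻¹ := by group
  have hcenle : Subgroup.zpowers (a ^ 2) ≤ Subgroup.center G :=
    Subgroup.zpowers_le.2 hacen
  -- conjugation formulas with zpow
  have haba : a * b * a⁻¹ = b⁻¹ := by
    have := congrArg (fun x => a * x * a⁻¹) hinv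
    simpa [mul_assoc] using this.symm
  have hconj : ∀ j : ℤ, a⁻¹ * b ^ j * a = b ^ (-j) := by
    intro j
    have : (a⁻¹ * b * a) ^ j = a⁻¹ * b ^ j * a := by
      rw [show a⁻¹ * b * a = a⁻¹ * b * a⁻¹⁻¹ by rw [inv_inv]]
      rw [← MulAut.conj_apply, ← map_zpow, MulAut.conj_apply, inv_inv]
    rw [← this, hrel, inv_zpow, zpow_neg]
  have hconj' : ∀ j : ℤ, a * b ^ j * a⁻¹ = b ^ (-j) := by
    intro j
    have : (a * b * a⁻¹) ^ j = a * b ^ j * a⁻¹ := by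
      rw [← MulAut.conj_apply, ← map_zpow, MulAut.conj_apply]
    rw [← this, haba, inv_zpow, zpow_neg]
  -- normality of zpowers b
  have hmem1 : a ∈ (Subgroup.normalizer (Subgroup.zpowers b : Set G) : Subgroup G) := by
    rw [Subgroup.mem_normalizer_iff'']
    intro h
    constructor
    · intro hh
      obtain ⟨j, rfl⟩ := Subgroup.mem_zpowers_iff.1 hh
      exact Subgroup.mem_zpowers_iff.2 ⟨-j, (hconj j).symm⟩
    · intro hh
      obtain ⟨j, hj⟩ := Subgroup.mem_zpowers_iff.1 hh
      have hh2 : h = a * b ^ j * a⁻¹ := by rw [hj]; group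
      rw [hh2, hconj' j]
      exact Subgroup.mem_zpowers_iff.2 ⟨-j, rfl⟩
  have hmem2 : b ∈ (Subgroup.normalizer (Subgroup.zpowers b : Set G) : Subgroup G) :=
    Subgroup.le_normalizer (Subgroup.mem_zpowers b)
  haveI hNb : (Subgroup.zpowers b).Normal := by
    rw [← Subgroup.normalizer_eq_top_iff, eq_top_iff, ← hgen, Subgroup.closure_le]
    rintro x (rfl | rfl)
    exacts [hmem1, hmem2]
  -- G = <a> * <b>
  have hsupa : a ∈ Subgroup.zpowers a ⊔ Subgroup.zpowers b :=
    Subgroup.mem_sup_left (Subgroup.mem_zpowers a)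
  have hsupb : b ∈ Subgroup.zpowers a ⊔ Subgroup.zpowers b :=
    Subgroup.mem_sup_right (Subgroup.mem_zpowers b)
  have hsup : Subgroup.zpowers a ⊔ Subgroup.zpowers b = ⊤ := by
    rw [eq_top_iff, ← hgen, Subgroup.closure_le]
    rintro x (rfl | rfl)
    exacts [hsupa, hsupb]
  have hset : (Set.univ : Set G) = (Subgroup.zpowers a : Set G) * (Subgroup.zpowers b : Set G) := by
    rw [← Subgroup.mul_normal, hsup, Subgroup.coe_top]
  -- orders
  have hdvd_a : orderOf a ∣ 2 * n := orderOf_dvd_of_pow_eq_one ha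
  have hdvd_b : orderOf b ∣ 3 := orderOf_dvd_of_pow_eq_one hb
  have hcard_le : 6 * n ≤ orderOf a * orderOf b := by
    calc 6 * n = Nat.card G := hcard.symm
    _ = Nat.card (Set.univ : Set G) := by rw [Nat.card_coe_set_eq, Set.ncard_univ]
    _ = Nat.card ((Subgroup.zpowers a : Set G) * (Subgroup.zpowers b : Set G)) := by rw [hset]
    _ ≤ Nat.card (Subgroup.zpowers a) * Nat.card (Subgroup.zpowers b) :=
        Set.natCard_mul_le
    _ = orderOf a * orderOf b := by rw [Nat.card_zpowers, Nat.card_zpowers]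
  have hob : orderOf b = 3 := by
    have h1 : orderOf a ≤ 2 * n := Nat.le_of_dvd (by omega) hdvd_a
    rcases (Nat.prime_three).eq_one_or_self_of_dvd _ hdvd_b with h2 | h2
    · rw [h2] at hcard_le; omega
    · exact h2
  have hoa : orderOf a = 2 * n := by
    have h1 : orderOf a ≤ 2 * n := Nat.le_of_dvd (by omega) hdvd_a
    rw [hob] at hcard_le; omega
  -- center ≤ zpowers (a^2)
  have hle2 : Subgroup.center G ≤ Subgroup.zpowers (a ^ 2) := by
    intro g hg
    have hgm : g ∈ (Subgroup.zpowers a : Set G) * (Subgroup.zpowers b : Set G) := by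
      rw [← hset]; trivial
    obtain ⟨x, hx, y, hy, rfl⟩ := hgm
    obtain ⟨i, rfl⟩ := Subgroup.mem_zpowers_iff.1 hx
    obtain ⟨j, rfl⟩ := Subgroup.mem_zpowers_iff.1 hy
    -- b^j = 1
    have hcomm := Subgroup.mem_center_iff.1 hg a
    have h1 : a * b ^ j = b ^ j * a := by
      have : a ^ i * (a * b ^ j) = a ^ i * (b ^ j * a) := by
        calc a ^ i * (a * b ^ j) = a * (a ^ i * b ^ j) := by
              rw [← mul_assoc, ← mul_assoc, ← zpow_one_add, ← zpow_add_one, add_comm]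
        _ = a ^ i * b ^ j * a := hcomm
        _ = a ^ i * (b ^ j * a) := by rw [mul_assoc]
      exact mul_left_cancel this
    have h2 : b ^ j * a = a * b ^ (-j) := by
      have := hconj j
      have := congrArg (fun x => a * x) this
      simpa [mul_assoc] using this
    have h3 : b ^ j = b ^ (-j) := by
      have : a * b ^ j = a * b ^ (-j) := by rw [h1, h2]
      exact mul_left_cancel this
    have h4 : b ^ (2 * j) = 1 := by
      rw [two_mul, zpow_add]
      nth_rewrite 1 [h3]
      rw [← zpow_add]
      simp
    have h5 : (3 : ℤ) ∣ 2 * j := by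
      have := (orderOf_dvd_iff_zpow_eq_one (x := b) (i := 2 * j)).2 h4
      rwa [hob] at this
    have h6 : (3 : ℤ) ∣ j := by omega
    obtain ⟨k, rfl⟩ := h6
    have hbj : b ^ ((3 : ℤ) * k) = 1 := by
      rw [zpow_mul, show ((3:ℤ) : ℤ) = ((3:ℕ) : ℤ) by norm_num, zpow_natCast, hb, one_zpow]
    simp only [hbj, mul_one] at hg ⊢
    -- now a^i central, i even
    rcases Int.even_or_odd i with ⟨k, hk⟩ | ⟨k, hk⟩
    · refine ⟨k, ?_⟩
      show (a ^ 2) ^ k = a ^ i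
      rw [hk, ← zpow_natCast a 2, ← zpow_mul]
      norm_num [two_mul]
    · exfalso
      have h7 : (a ^ 2) ^ k ∈ Subgroup.center G := hcenle ⟨k, rfl⟩
      have h8 : a ∈ Subgroup.center G := by
        have : a = ((a ^ 2) ^ k)⁻¹ * a ^ i := by
          rw [hk, ← zpow_natCast a 2, ← zpow_mul]
          norm_num
          rw [zpow_add, zpow_one, inv_mul_cancel_left]
        rw [this]
        exact mul_mem (inv_mem h7) hg
      have h9 := Subgroup.mem_center_iff.1 h8 b
      have h10 : b = b⁻¹ := by
        have : a * b = a * b⁻¹ := by rw [← h9, hba]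
        exact mul_left_cancel this
      have h11 : b ^ 2 = 1 := by
        rw [pow_two]
        nth_rewrite 2 [h10]
        simp
      have := orderOf_dvd_of_pow_eq_one h11
      rw [hob] at this
      omega
  have hcen_eq : Subgroup.center G = Subgroup.zpowers (a ^ 2) := le_antisymm hle2 hcenle
  have hcard_cen : Nat.card (Subgroup.center G) = n := by
    rw [hcen_eq, Nat.card_zpowers, orderOf_pow, hoa,
      Nat.gcd_eq_right ⟨n, rfl⟩]
    omega
  refine ⟨hcen_eq, hcard_cen, ?_⟩
  -- quotient
  set Z := Subgroup.center G with hZ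
  have hQcard : Nat.card (G ⧸ Z) = 6 := by
    have h := Subgroup.card_eq_card_quotient_mul_card_subgroup Z
    rw [hcard, hcard_cen] at h
    have : 6 * n = Nat.card (G ⧸ Z) * n := h
    have hn' : 0 < n := hn
    exact (Nat.eq_of_mul_eq_mul_right hn' this.symm)
  set A : G ⧸ Z := (a : G ⧸ Z) with hA
  set B : G ⧸ Z := (b : G ⧸ Z) with hB
  have hA2 : A ^ 2 = 1 := by
    rw [hA, ← QuotientGroup.mk_pow, QuotientGroup.eq_one_iff]
    exact hacen
  have hB3 : B ^ 3 = 1 := by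
    rw [hB, ← QuotientGroup.mk_pow, hb]
    rfl
  have hbinv : b⁻¹ = b * b := by
    apply inv_eq_of_mul_eq_one_right
    rw [show b * (b * b) = b ^ 3 by rw [pow_succ, pow_two, mul_assoc], hb]
  have hBAq : B * A = A * (B * B) := by
    rw [hA, hB, ← QuotientGroup.mk_mul, ← QuotientGroup.mk_mul, ← QuotientGroup.mk_mul,
      hba, hbinv]
  have hBkA : ∀ k : ℕ, B ^ k * A = A * B ^ (2 * k) := by
    intro k
    induction k with
    | zero => simp
    | succ k ih =>
      calc B ^ (k + 1) * A = B ^ k * (B * A) := by rw [pow_succ, mul_assoc]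
      _ = B ^ k * (A * (B * B)) := by rw [hBAq]
      _ = (B ^ k * A) * (B * B) := by rw [mul_assoc]
      _ = (A * B ^ (2 * k)) * (B * B) := by rw [ih]
      _ = A * (B ^ (2 * k) * B * B) := by rw [mul_assoc, ← mul_assoc (B ^ (2 * k))]
      _ = A * B ^ (2 * (k + 1)) := by
          rw [← pow_succ, ← pow_succ]
          have h212 : 2 * k + 1 + 1 = 2 * (k + 1) := by omega
          rw [h212]
  have hcongr : ∀ m m' : ℕ, ((m : ZMod 3) = (m' : ZMod 3)) → B ^ m = B ^ m' :=
    fun m m' h => pow_eq_of_zmod' hB3 h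
  have hvalcast : ∀ i : ZMod 3, ((i.val : ℕ) : ZMod 3) = i := fun i => ZMod.natCast_rightInverse i
  have h3z : (3 : ZMod 3) = 0 := by decide
  let f : DihedralGroup 3 →* (G ⧸ Z) := {
    toFun := fun x => match x with
      | .r i => B ^ i.val
      | .sr i => A * B ^ i.val
    map_one' := by
      show B ^ (0 : ZMod 3).val = 1
      rw [ZMod.val_zero, pow_zero]
    map_mul' := by
      rintro (i | i) (j | j)
      · show B ^ (i + j).val = B ^ i.val * B ^ j.val
        rw [← pow_add]
        apply hcongr
        push_cast [hvalcast]
        rfl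
      · show A * B ^ (j - i).val = B ^ i.val * (A * B ^ j.val)
        rw [← mul_assoc, hBkA, mul_assoc, ← pow_add]
        congr 1
        apply hcongr
        push_cast [hvalcast]
        linear_combination (-i : ZMod 3) * h3z
      · show A * B ^ (i + j).val = A * B ^ i.val * B ^ j.val
        rw [mul_assoc, ← pow_add]
        congr 1
        apply hcongr
        push_cast [hvalcast]
        rfl
      · show B ^ (j - i).val = (A * B ^ i.val) * (A * B ^ j.val)
        rw [show (A * B ^ i.val) * (A * B ^ j.val) = A * (B ^ i.val * A) * B ^ j.val by group,
          hBkA, show A * (A * B ^ (2 * i.val)) * B ^ j.val = (A * A) * B ^ (2 * i.val + j.val) by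
            rw [pow_add]; group,
          show A * A = A ^ 2 by rw [pow_two], hA2, one_mul]
        apply hcongr
        push_cast [hvalcast]
        linear_combination (-i : ZMod 3) * h3z
  }
  have hfr1 : f (DihedralGroup.r 1) = B := by
    show B ^ (1 : ZMod 3).val = B
    rw [ZMod.val_one, pow_one]
  have hfsr0 : f (DihedralGroup.sr 0) = A := by
    show A * B ^ (0 : ZMod 3).val = A
    rw [ZMod.val_zero, pow_zero, mul_one]
  have hsurj : Function.Surjective f := by
    rw [← MonoidHom.range_eq_top]
    have hclos : Subgroup.closure ({A, B} : Set (G ⧸ Z)) = ⊤ := by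
      have h1 := congrArg (Subgroup.map (QuotientGroup.mk' Z)) hgen
      rw [MonoidHom.map_closure] at h1
      rw [Subgroup.map_top_of_surjective _ (QuotientGroup.mk'_surjective Z)] at h1
      rw [← h1]
      congr 1
      rw [Set.image_insert_eq, Set.image_singleton]
      rfl
    rw [eq_top_iff, ← hclos, Subgroup.closure_le]
    rintro x (rfl | rfl)
    · exact ⟨DihedralGroup.sr 0, hfsr0⟩
    · exact ⟨DihedralGroup.r 1, hfr1⟩
  have hbij : Function.Bijective f := by
    rw [Nat.bijective_iff_surjective_and_card]
    refine ⟨hsurj, ?_⟩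
    rw [hQcard, DihedralGroup.nat_card]
  exact ⟨(MulEquiv.ofBijective f hbij).symm⟩
end
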